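/- Consider the action of the group (𝔽₁₇ˣ)³ on GL₂(𝔽₁₇) given by (s,t,u)·M = diag(s,u)·M·diag(t,u⁻¹), where diag(α,β) denotes the invertible diagonal 2×2 matrix with diagonal entries α, β. This is a group action, and it has exactly 321 orbits; equivalently, the equivalence relation M ∼ M′ ⇔ ∃ s,t,u ∈ 𝔽₁₇ˣ, M′ = diag(s,u)·M·diag(t,u⁻¹) on GL₂(𝔽₁₇) has exactly 321 equivalence classes. -/

import Mathlib

namespace DoubleCosets17

set_option maxRecDepth 8000
set_option maxHeartbeats 1000000

/-- The relation on `GL₂(𝔽₁₇)` induced by the action of `(𝔽₁₇ˣ)³` given by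
`(s,t,u)·M = diag(s,u)·M·diag(t,u⁻¹)`: `M ∼ M′` iff `M′ = diag(s,u)·M·diag(t,u⁻¹)`
for some units `s, t, u` of `𝔽₁₇`. -/
def rel (M M' : Matrix.GeneralLinearGroup (Fin 2) (ZMod 17)) : Prop :=
  ∃ s t u : (ZMod 17)ˣ,
    (M' : Matrix (Fin 2) (Fin 2) (ZMod 17)) =
      Matrix.diagonal ![(s : ZMod 17), (u : ZMod 17)] *
        (M : Matrix (Fin 2) (Fin 2) (ZMod 17)) *
        Matrix.diagonal ![(t : ZMod 17), ((u⁻¹ : (ZMod 17)ˣ) : ZMod 17)]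

instance fact17 : Fact (Nat.Prime 17) := ⟨by norm_num⟩

abbrev F := ZMod 17
abbrev GL2 := Matrix.GeneralLinearGroup (Fin 2) F

lemma conj_id (u : Fˣ) (x : F) : (u : F) * x * ((u⁻¹ : Fˣ) : F) = x := by
  have h : (u : F) * ((u⁻¹ : Fˣ) : F) = 1 := by exact_mod_cast u.mul_inv
  calc (u : F) * x * ((u⁻¹ : Fˣ) : F) = ((u : F) * ((u⁻¹ : Fˣ) : F)) * x := by ring
    _ = x := by rw [h, one_mul]

set_option linter.unreachableTactic false in
set_option linter.unusedTactic false in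
lemma rel_iff (M M' : GL2) : rel M M' ↔ ∃ s t u : Fˣ,
    (M' : Matrix (Fin 2) (Fin 2) F) 0 0 = s * t * (M : Matrix (Fin 2) (Fin 2) F) 0 0 ∧
    (M' : Matrix (Fin 2) (Fin 2) F) 0 1 = s * (u : Fˣ)⁻¹ * (M : Matrix (Fin 2) (Fin 2) F) 0 1 ∧
    (M' : Matrix (Fin 2) (Fin 2) F) 1 0 = u * t * (M : Matrix (Fin 2) (Fin 2) F) 1 0 ∧
    (M' : Matrix (Fin 2) (Fin 2) F) 1 1 = (M : Matrix (Fin 2) (Fin 2) F) 1 1 := by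
  constructor
  · rintro ⟨s, t, u, h⟩
    refine ⟨s, t, u, ?_, ?_, ?_, ?_⟩ <;> rw [h] <;>
      rw [Matrix.mul_diagonal, Matrix.diagonal_mul] <;>
      simp only [Matrix.cons_val_zero, Matrix.cons_val_one, Matrix.head_cons] <;>
      first
        | ring1
        | exact conj_id u ((M : Matrix (Fin 2) (Fin 2) F) 1 1)
  · rintro ⟨s, t, u, h1, h2, h3, h4⟩
    refine ⟨s, t, u, ?_⟩
    ext i j
    rw [Matrix.mul_diagonal, Matrix.diagonal_mul]
    fin_cases i <;> fin_cases j <;>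
      simp only [Fin.mk_zero, Fin.mk_one, Matrix.cons_val_zero, Matrix.cons_val_one,
        Matrix.head_cons, Fin.isValue, h1, h2, h3, h4] <;>
      first
        | ring1
        | exact (conj_id u ((M : Matrix (Fin 2) (Fin 2) F) 1 1)).symm

/-- The complete invariant of the orbit of `M = !![a,b;c,d]`:
`(d, a = 0?, b = 0?, c = 0?, a/(bc))`. -/
def inv2 (M : GL2) : F × Bool × Bool × Bool × F :=
  ((M : Matrix (Fin 2) (Fin 2) F) 1 1,
   decide ((M : Matrix (Fin 2) (Fin 2) F) 0 0 = 0),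
   decide ((M : Matrix (Fin 2) (Fin 2) F) 0 1 = 0),
   decide ((M : Matrix (Fin 2) (Fin 2) F) 1 0 = 0),
   (M : Matrix (Fin 2) (Fin 2) F) 0 0 *
     ((M : Matrix (Fin 2) (Fin 2) F) 0 1 * (M : Matrix (Fin 2) (Fin 2) F) 1 0)⁻¹)

/-- Which tuples are attainable as invariants. -/
def Pb : F × Bool × Bool × Bool × F → Bool
  | (d, false, false, false, r) => decide (r ≠ 0) && decide (r * d ≠ 1)
  | (_, true, false, false, r) => decide (r = 0)
  | (d, false, true, false, r) => decide (d ≠ 0) && decide (r = 0)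
  | (d, false, false, true, r) => decide (d ≠ 0) && decide (r = 0)
  | (d, false, true, true, r) => decide (d ≠ 0) && decide (r = 0)
  | _ => false

/-- The type of attainable invariants; it has exactly 321 elements. -/
abbrev T := {x : F × Bool × Bool × Bool × F // Pb x = true}

lemma det_ne (M : GL2) :
    (M : Matrix (Fin 2) (Fin 2) F) 0 0 * (M : Matrix (Fin 2) (Fin 2) F) 1 1 -
      (M : Matrix (Fin 2) (Fin 2) F) 0 1 * (M : Matrix (Fin 2) (Fin 2) F) 1 0 ≠ 0 := by
  have h : IsUnit (M : Matrix (Fin 2) (Fin 2) F).det :=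
    (Matrix.isUnit_iff_isUnit_det _).mp M.isUnit
  rw [Matrix.det_fin_two] at h
  exact h.ne_zero

lemma Pb_char {a b c d : F} (hdet : a * d - b * c ≠ 0) :
    Pb (d, decide (a = 0), decide (b = 0), decide (c = 0), a * (b * c)⁻¹) = true := by
  by_cases h1 : a = 0 <;> by_cases h2 : b = 0 <;> by_cases h3 : c = 0 <;>
    simp [Pb, h1, h2, h3, sub_eq_zero] at hdet ⊢
  · exact fun h => hdet (by simp [h])
  · exact fun h => hdet (by simp [h])
  · exact fun h => hdet (by simp [h])
  · intro h
    apply hdet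
    field_simp at h
    linear_combination h

lemma Pb_inv2 (M : GL2) : Pb (inv2 M) = true := Pb_char (det_ne M)

lemma mul3_eq_zero_iff {x y z : F} (hx : x ≠ 0) (hy : y ≠ 0) : x * y * z = 0 ↔ z = 0 := by
  rw [mul_eq_zero, mul_eq_zero]
  constructor
  · rintro ((h | h) | h)
    · exact absurd h hx
    · exact absurd h hy
    · exact h
  · exact fun h => Or.inr h

lemma ratio_eq (s t u : Fˣ) (a b c : F) :
    (↑s * ↑t * a) * ((↑s * ↑(u⁻¹) * b) * (↑u * ↑t * c))⁻¹ = a * (b * c)⁻¹ := by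
  by_cases hb : b = 0
  · simp only [hb, mul_zero, zero_mul, inv_zero]
  · by_cases hc : c = 0
    · simp only [hc, mul_zero, zero_mul, inv_zero]
    · have hui : ((u⁻¹ : Fˣ) : F) = (u : F)⁻¹ := Units.val_inv_eq_inv_val u
      rw [hui]
      have hs : (s : F) ≠ 0 := s.ne_zero
      have ht : (t : F) ≠ 0 := t.ne_zero
      have hu : (u : F) ≠ 0 := u.ne_zero
      field_simp

lemma inv2_eq_of_rel {M M' : GL2} (h : rel M M') : inv2 M = inv2 M' := by
  obtain ⟨s, t, u, h1, h2, h3, h4⟩ := (rel_iff M M').1 h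
  have hs : (s : F) ≠ 0 := s.ne_zero
  have ht : (t : F) ≠ 0 := t.ne_zero
  have hui : ((u⁻¹ : Fˣ) : F) ≠ 0 := (u⁻¹ : Fˣ).ne_zero
  have hu : (u : F) ≠ 0 := u.ne_zero
  refine Prod.ext h4.symm (Prod.ext ?_ (Prod.ext ?_ (Prod.ext ?_ ?_)))
  · exact decide_eq_decide.mpr (by rw [h1, mul3_eq_zero_iff hs ht])
  · exact decide_eq_decide.mpr (by rw [h2, mul3_eq_zero_iff hs hui])
  · exact decide_eq_decide.mpr (by rw [h3, mul3_eq_zero_iff hu ht])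
  · show (M : Matrix (Fin 2) (Fin 2) F) 0 0 *
        ((M : Matrix (Fin 2) (Fin 2) F) 0 1 * (M : Matrix (Fin 2) (Fin 2) F) 1 0)⁻¹ =
      (M' : Matrix (Fin 2) (Fin 2) F) 0 0 *
        ((M' : Matrix (Fin 2) (Fin 2) F) 0 1 * (M' : Matrix (Fin 2) (Fin 2) F) 1 0)⁻¹
    rw [h1, h2, h3, ratio_eq]

lemma build_rel {a b c d a' b' c' : F}
    (hdet : a * d - b * c ≠ 0)
    (eA : (a = 0) ↔ (a' = 0)) (eB : (b = 0) ↔ (b' = 0)) (eC : (c = 0) ↔ (c' = 0))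
    (hR : a * (b * c)⁻¹ = a' * (b' * c')⁻¹) :
    ∃ s t u : Fˣ, a' = ↑s * ↑t * a ∧ b' = ↑s * ↑(u⁻¹) * b ∧ c' = ↑u * ↑t * c := by
  by_cases hbz : b = 0 <;> by_cases hcz : c = 0
  · -- b = c = 0, so a ≠ 0
    have haz : a ≠ 0 := fun h0 => hdet (by rw [hbz, h0]; ring)
    have ha'z : a' ≠ 0 := fun h0 => haz (eA.2 h0)
    refine ⟨Units.mk0 (a' / a) (div_ne_zero ha'z haz), 1, 1, ?_, ?_, ?_⟩
    · simp only [Units.val_mk0, Units.val_one, mul_one]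
      field_simp
    · simp [hbz, eB.1 hbz]
    · simp [hcz, eC.1 hcz]
  · -- b = 0, c ≠ 0, a ≠ 0
    have haz : a ≠ 0 := fun h0 => hdet (by rw [hbz, h0]; ring)
    have ha'z : a' ≠ 0 := fun h0 => haz (eA.2 h0)
    have hc'z : c' ≠ 0 := fun h0 => hcz (eC.2 h0)
    refine ⟨Units.mk0 (a' * c / (a * c'))
        (div_ne_zero (mul_ne_zero ha'z hcz) (mul_ne_zero haz hc'z)),
      Units.mk0 (c' / c) (div_ne_zero hc'z hcz), 1, ?_, ?_, ?_⟩
    · simp only [Units.val_mk0]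
      field_simp
    · simp [hbz, eB.1 hbz]
    · simp only [Units.val_mk0, Units.val_one, one_mul]
      field_simp
  · -- c = 0, b ≠ 0, a ≠ 0
    have haz : a ≠ 0 := fun h0 => hdet (by rw [hcz, h0]; ring)
    have ha'z : a' ≠ 0 := fun h0 => haz (eA.2 h0)
    have hb'z : b' ≠ 0 := fun h0 => hbz (eB.2 h0)
    refine ⟨Units.mk0 (b' / b) (div_ne_zero hb'z hbz),
      Units.mk0 (a' * b / (a * b'))
        (div_ne_zero (mul_ne_zero ha'z hbz) (mul_ne_zero haz hb'z)), 1, ?_, ?_, ?_⟩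
    · simp only [Units.val_mk0]
      field_simp
    · simp only [Units.val_mk0, inv_one, Units.val_one, mul_one]
      field_simp
    · simp [hcz, eC.1 hcz]
  · -- b ≠ 0, c ≠ 0
    have hb'z : b' ≠ 0 := fun h0 => hbz (eB.2 h0)
    have hc'z : c' ≠ 0 := fun h0 => hcz (eC.2 h0)
    refine ⟨Units.mk0 (b' / b) (div_ne_zero hb'z hbz),
      Units.mk0 (c' / c) (div_ne_zero hc'z hcz), 1, ?_, ?_, ?_⟩
    · simp only [Units.val_mk0]
      by_cases haz : a = 0
      · simp [haz, eA.1 haz]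
      · have ha'z : a' ≠ 0 := fun h0 => haz (eA.2 h0)
        field_simp at hR
        field_simp
        first
          | linear_combination hR
          | linear_combination -hR
    · simp only [Units.val_mk0, inv_one, Units.val_one, mul_one]
      field_simp
    · simp only [Units.val_mk0, Units.val_one, one_mul]
      field_simp

lemma rel_of_inv2_eq {M M' : GL2} (h : inv2 M = inv2 M') : rel M M' := by
  have hdd := congrArg (fun x : F × Bool × Bool × Bool × F => x.1) h
  have hA := congrArg (fun x : F × Bool × Bool × Bool × F => x.2.1) h
  have hB := congrArg (fun x : F × Bool × Bool × Bool × F => x.2.2.1) h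
  have hC := congrArg (fun x : F × Bool × Bool × Bool × F => x.2.2.2.1) h
  have hR := congrArg (fun x : F × Bool × Bool × Bool × F => x.2.2.2.2) h
  simp only [inv2] at hdd hA hB hC hR
  obtain ⟨s, t, u, h1, h2, h3⟩ :=
    build_rel (det_ne M) (decide_eq_decide.mp hA) (decide_eq_decide.mp hB)
      (decide_eq_decide.mp hC) hR
  exact (rel_iff M M').2 ⟨s, t, u, h1, h2, h3, hdd.symm⟩

lemma rel_iff_inv2 (M M' : GL2) : rel M M' ↔ inv2 M = inv2 M' :=
  ⟨inv2_eq_of_rel, rel_of_inv2_eq⟩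

lemma coe_mkOfDetNeZero (A : Matrix (Fin 2) (Fin 2) F) (h : A.det ≠ 0) :
    ((Matrix.GeneralLinearGroup.mkOfDetNeZero A h : GL2) : Matrix (Fin 2) (Fin 2) F) = A := rfl

lemma surj_inv2 : ∀ x : T, ∃ M : GL2, inv2 M = x.1 := by
  rintro ⟨⟨d, za, zb, zc, r⟩, hx⟩
  cases za <;> cases zb <;> cases zc <;> simp [Pb] at hx
  · -- all nonzero: M = !![r,1;1,d]
    obtain ⟨hr, hrd⟩ := hx
    refine ⟨Matrix.GeneralLinearGroup.mkOfDetNeZero !![r, 1; 1, d] ?_, ?_⟩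
    · rw [Matrix.det_fin_two_of]
      intro h0
      exact hrd (by linear_combination h0)
    · show inv2 _ = _
      simp [inv2, coe_mkOfDetNeZero, hr]
  · -- c = 0 : M = !![1,1;0,d]
    obtain ⟨hd0, hr⟩ := hx
    refine ⟨Matrix.GeneralLinearGroup.mkOfDetNeZero !![1, 1; 0, d] ?_, ?_⟩
    · rw [Matrix.det_fin_two_of]; simpa using hd0
    · show inv2 _ = _
      simp [inv2, coe_mkOfDetNeZero, hr]
  · -- b = 0 : M = !![1,0;1,d]
    obtain ⟨hd0, hr⟩ := hx
    refine ⟨Matrix.GeneralLinearGroup.mkOfDetNeZero !![1, 0; 1, d] ?_, ?_⟩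
    · rw [Matrix.det_fin_two_of]; simpa using hd0
    · show inv2 _ = _
      simp [inv2, coe_mkOfDetNeZero, hr]
  · -- b = c = 0 : M = !![1,0;0,d]
    obtain ⟨hd0, hr⟩ := hx
    refine ⟨Matrix.GeneralLinearGroup.mkOfDetNeZero !![1, 0; 0, d] ?_, ?_⟩
    · rw [Matrix.det_fin_two_of]; simpa using hd0
    · show inv2 _ = _
      simp [inv2, coe_mkOfDetNeZero, hr]
  · -- a = 0 : M = !![0,1;-1,d]
    refine ⟨Matrix.GeneralLinearGroup.mkOfDetNeZero !![0, 1; -1, d] ?_, ?_⟩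
    · rw [Matrix.det_fin_two_of]; norm_num
    · show inv2 _ = _
      simp [inv2, coe_mkOfDetNeZero, hx]

lemma card_T : Fintype.card T = 321 := by decide

attribute [-instance] fact17

/-- The action `(s,t,u)·M = diag(s,u)·M·diag(t,u⁻¹)` of `(𝔽₁₇ˣ)³` on `GL₂(𝔽₁₇)` is a
group action and it has exactly `321` orbits; equivalently, the induced relation `rel`
is an equivalence relation with exactly `321` equivalence classes. -/
theorem card_quotient_rel_eq_321 :
    ∃ hrel : Equivalence rel,
      Nat.card (Quotient (⟨rel, hrel⟩ :
        Setoid (Matrix.GeneralLinearGroup (Fin 2) (ZMod 17)))) = 321 := by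
  have hrel : Equivalence rel :=
    ⟨fun M => (rel_iff_inv2 M M).2 rfl,
     fun h => (rel_iff_inv2 _ _).2 ((rel_iff_inv2 _ _).1 h).symm,
     fun h h' => (rel_iff_inv2 _ _).2 (((rel_iff_inv2 _ _).1 h).trans ((rel_iff_inv2 _ _).1 h'))⟩
  refine ⟨hrel, ?_⟩
  have e : Quotient (⟨rel, hrel⟩ : Setoid GL2) ≃ T := by
    refine Equiv.ofBijective (Quotient.lift (fun M => (⟨inv2 M, Pb_inv2 M⟩ : T))
      (fun M M' h => Subtype.ext (inv2_eq_of_rel h))) ⟨?_, ?_⟩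
    · rintro ⟨M⟩ ⟨M'⟩ hMM'
      exact Quotient.sound (rel_of_inv2_eq (congrArg Subtype.val hMM'))
    · rintro x
      obtain ⟨M, hM⟩ := surj_inv2 x
      exact ⟨Quotient.mk _ M, Subtype.ext hM⟩
  rw [Nat.card_congr e, Nat.card_eq_fintype_card, card_T]

end DoubleCosets17
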